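/- The item-wise regret is not in general an upper bound on the ex-post regret: there exist a number of items m ≥ 2, nonempty finite bid sets B_j ⊆ ℝ, a truthful report v with v_j ∈ B_j for all j, and a utility function U : (Fin m → ℝ) → ℝ such that Σ_{j=1}^m Rgt_j < Rgt, i.e. the item-wise regret strictly underestimates the ex-post regret. -/

import Mathlib

/-- The item-wise regret is not in general an upper bound on the
ex-post regret: there exist `m ≥ 2`, nonempty finite bid sets, a truthful report
`v` with `v j ∈ B j` for all `j`, and a utility `U` such that
`∑ j, Rgt_j < Rgt`. -/
theorem exists_itemwise_regret_lt_regret :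
    ∃ (m : ℕ) (B : Fin m → Finset ℝ) (v : Fin m → ℝ) (U : (Fin m → ℝ) → ℝ)
      (hB : ∀ j, (B j).Nonempty),
      2 ≤ m ∧ (∀ j, v j ∈ B j) ∧
      (∑ j : Fin m, (B j).sup' (hB j) (fun bj => U (Function.update v j bj) - U v))
        <
      (Fintype.piFinset B).sup' (Fintype.piFinset_nonempty.mpr hB)
        (fun b => U b - U v) := by
  refine ⟨2, fun _ => {0, 1}, fun _ => 0, fun b => b 0 * b 1,
    fun j => ⟨0, by simp⟩, le_refl 2, fun j => by simp, ?_⟩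
  have hL : (∑ j : Fin 2, ({0, 1} : Finset ℝ).sup' ⟨0, by simp⟩
      (fun bj => (Function.update (fun _ => (0:ℝ)) j bj) 0 *
        (Function.update (fun _ => (0:ℝ)) j bj) 1 - (0:ℝ) * 0)) = 0 := by
    rw [Fin.sum_univ_two]
    have h0 : ∀ bj : ℝ, (Function.update (fun _ => (0:ℝ)) (0 : Fin 2) bj) 0 *
        (Function.update (fun _ => (0:ℝ)) (0 : Fin 2) bj) 1 - (0:ℝ) * 0 = 0 := by
      intro bj; simp [Function.update]
    have h1 : ∀ bj : ℝ, (Function.update (fun _ => (0:ℝ)) (1 : Fin 2) bj) 0 *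
        (Function.update (fun _ => (0:ℝ)) (1 : Fin 2) bj) 1 - (0:ℝ) * 0 = 0 := by
      intro bj; simp [Function.update]
    simp only [h0, h1]
    simp
  rw [hL]
  have hmem : (fun _ => (1:ℝ)) ∈ Fintype.piFinset (fun _ : Fin 2 => ({0,1} : Finset ℝ)) := by
    simp
  calc (0:ℝ) < (fun _ => (1:ℝ)) 0 * (fun _ => (1:ℝ)) 1 - (0:ℝ) * 0 := by norm_num
    _ ≤ _ := Finset.le_sup' (fun b => (fun b => b 0 * b 1) b - (fun b => b 0 * b 1) (fun _ => (0:ℝ))) hmem
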